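/- Let d ≥ 2 and let Ω be an open subset of ℝ^d. Let u, v : ℝ^d → ℝ be C² on Ω and satisfy the Helmholtz equations −Δu = E·u and −Δv = E·v on Ω with the same energy E ∈ ℝ. Define the vector field F : Ω → ℝ^d by F(x) = ((d−2)/2)(v(x)∇u(x) + u(x)∇v(x)) + (E·u(x)v(x) − ⟨∇u(x),∇v(x)⟩)·x + ⟨x,∇u(x)⟩∇v(x) + ⟨x,∇v(x)⟩∇u(x). Then for every x ∈ Ω, div F(x) = 2E·u(x)·v(x). -/

import Mathlib

open MeasureTheory
open scoped RealInnerProductSpace Classical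

noncomputable section

/-- The Euclidean Laplacian: the sum of the second partial derivatives. -/
def lap {d : ℕ} (u : EuclideanSpace ℝ (Fin d) → ℝ) (x : EuclideanSpace ℝ (Fin d)) : ℝ :=
  ∑ i, fderiv ℝ (fun y => fderiv ℝ u y (EuclideanSpace.single i (1:ℝ))) x
    (EuclideanSpace.single i (1:ℝ))

/-- The divergence: the sum of the partial derivatives of the components. -/
def divg {d : ℕ} (F : EuclideanSpace ℝ (Fin d) → EuclideanSpace ℝ (Fin d))
    (x : EuclideanSpace ℝ (Fin d)) : ℝ :=
  ∑ i, fderiv ℝ (fun y => ⟪F y, EuclideanSpace.single i (1:ℝ)⟫) x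
    (EuclideanSpace.single i (1:ℝ))

namespace DivAux

variable {d : ℕ}

lemma grad_inner (f : EuclideanSpace ℝ (Fin d) → ℝ) (y w : EuclideanSpace ℝ (Fin d)) :
    ⟪gradient f y, w⟫ = fderiv ℝ f y w := by
  rw [gradient]; exact InnerProductSpace.toDual_symm_apply

lemma grad_apply (f : EuclideanSpace ℝ (Fin d) → ℝ) (y : EuclideanSpace ℝ (Fin d)) (i : Fin d) :
    gradient f y i = fderiv ℝ f y (EuclideanSpace.single i (1:ℝ)) := by
  rw [← grad_inner f y (EuclideanSpace.single i 1), real_inner_comm,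
    EuclideanSpace.inner_single_left]
  simp

lemma inner_pt_grad (f : EuclideanSpace ℝ (Fin d) → ℝ) (y : EuclideanSpace ℝ (Fin d)) :
    ⟪y, gradient f y⟫ = fderiv ℝ f y y := by
  rw [real_inner_comm, grad_inner]

lemma grad_grad (f g : EuclideanSpace ℝ (Fin d) → ℝ) (y : EuclideanSpace ℝ (Fin d)) :
    ⟪gradient f y, gradient g y⟫
      = ∑ j, fderiv ℝ f y (EuclideanSpace.single j (1:ℝ))
          * fderiv ℝ g y (EuclideanSpace.single j (1:ℝ)) := by
  rw [PiLp.inner_apply]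
  refine Finset.sum_congr rfl fun j _ => ?_
  rw [grad_apply, grad_apply]
  simp [mul_comm]

lemma clm_expand (L : EuclideanSpace ℝ (Fin d) →L[ℝ] ℝ) (x : EuclideanSpace ℝ (Fin d)) :
    L x = ∑ i, x i * L (EuclideanSpace.single i (1:ℝ)) := by
  have hx : x = ∑ i, x i • EuclideanSpace.single i (1:ℝ) := by
    ext j
    simp [EuclideanSpace.single_apply, WithLp.ofLp_sum, Finset.sum_apply, Pi.single_apply]
  conv_lhs => rw [hx]
  simp [map_sum]

end DivAux

set_option maxHeartbeats 1000000 in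
open DivAux in
theorem divergence_identity_equal_energies
    (d : ℕ) (hd : 2 ≤ d) (Ω : Set (EuclideanSpace ℝ (Fin d))) (hΩ : IsOpen Ω)
    (u v : EuclideanSpace ℝ (Fin d) → ℝ) (En : ℝ)
    (hu : ContDiffOn ℝ 2 u Ω) (hv : ContDiffOn ℝ 2 v Ω)
    (hHu : ∀ x ∈ Ω, -lap u x = En * u x) (hHv : ∀ x ∈ Ω, -lap v x = En * v x) :
    ∀ x ∈ Ω,
      divg (fun y =>
          (((d : ℝ) - 2) / 2) • (v y • gradient u y + u y • gradient v y)
          + (En * u y * v y - ⟪gradient u y, gradient v y⟫) • y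
          + ⟪y, gradient u y⟫ • gradient v y + ⟪y, gradient v y⟫ • gradient u y) x
        = 2 * En * u x * v x := by
  intro x hx
  have hmem : Ω ∈ nhds x := hΩ.mem_nhds hx
  -- differentiability facts
  have hud : ∀ y ∈ Ω, HasFDerivAt u (fderiv ℝ u y) y := fun y hy =>
    ((hu.differentiableOn (by norm_num)).differentiableAt (hΩ.mem_nhds hy)).hasFDerivAt
  have hvd : ∀ y ∈ Ω, HasFDerivAt v (fderiv ℝ v y) y := fun y hy =>
    ((hv.differentiableOn (by norm_num)).differentiableAt (hΩ.mem_nhds hy)).hasFDerivAt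
  have hux : HasFDerivAt u (fderiv ℝ u x) x := hud x hx
  have hvx : HasFDerivAt v (fderiv ℝ v x) x := hvd x hx
  have hu1 : ContDiffOn ℝ 1 (fderiv ℝ u) Ω := hu.fderiv_of_isOpen hΩ (by norm_num)
  have hv1 : ContDiffOn ℝ 1 (fderiv ℝ v) Ω := hv.fderiv_of_isOpen hΩ (by norm_num)
  set Au := fderiv ℝ (fderiv ℝ u) x with hAu_def
  set Av := fderiv ℝ (fderiv ℝ v) x with hAv_def
  have hAu : HasFDerivAt (fderiv ℝ u) Au x :=
    ((hu1.differentiableOn one_ne_zero).differentiableAt hmem).hasFDerivAt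
  have hAv : HasFDerivAt (fderiv ℝ v) Av x :=
    ((hv1.differentiableOn one_ne_zero).differentiableAt hmem).hasFDerivAt
  have hsymU : ∀ w z, Au w z = Au z w := fun w z =>
    second_derivative_symmetric_of_eventually (Filter.eventually_of_mem hmem hud) hAu w z
  have hsymV : ∀ w z, Av w z = Av z w := fun w z =>
    second_derivative_symmetric_of_eventually (Filter.eventually_of_mem hmem hvd) hAv w z
  -- second partials
  have hD2u : ∀ i : Fin d, HasFDerivAt (fun y => fderiv ℝ u y (EuclideanSpace.single i (1:ℝ)))
      ((ContinuousLinearMap.apply ℝ ℝ (EuclideanSpace.single i (1:ℝ))).comp Au) x := fun i =>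
    ((ContinuousLinearMap.apply ℝ ℝ (EuclideanSpace.single i (1:ℝ))).hasFDerivAt).comp x hAu
  have hD2v : ∀ i : Fin d, HasFDerivAt (fun y => fderiv ℝ v y (EuclideanSpace.single i (1:ℝ)))
      ((ContinuousLinearMap.apply ℝ ℝ (EuclideanSpace.single i (1:ℝ))).comp Av) x := fun i =>
    ((ContinuousLinearMap.apply ℝ ℝ (EuclideanSpace.single i (1:ℝ))).hasFDerivAt).comp x hAv
  have hproj : ∀ j : Fin d, HasFDerivAt (fun y : EuclideanSpace ℝ (Fin d) => y j)
      (EuclideanSpace.proj j : EuclideanSpace ℝ (Fin d) →L[ℝ] ℝ) x :=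
    fun j => (EuclideanSpace.proj j : EuclideanSpace ℝ (Fin d) →L[ℝ] ℝ).hasFDerivAt
  -- laplacian identities
  have hEu : ∑ i, Au (EuclideanSpace.single i (1:ℝ)) (EuclideanSpace.single i (1:ℝ))
      = -(En * u x) := by
    have h1 : lap u x = ∑ i, Au (EuclideanSpace.single i (1:ℝ)) (EuclideanSpace.single i (1:ℝ)) := by
      unfold lap
      refine Finset.sum_congr rfl fun i _ => ?_
      rw [(hD2u i).fderiv]
      rfl
    have := hHu x hx
    linarith [this, h1]
  have hEv : ∑ i, Av (EuclideanSpace.single i (1:ℝ)) (EuclideanSpace.single i (1:ℝ))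
      = -(En * v x) := by
    have h1 : lap v x = ∑ i, Av (EuclideanSpace.single i (1:ℝ)) (EuclideanSpace.single i (1:ℝ)) := by
      unfold lap
      refine Finset.sum_congr rfl fun i _ => ?_
      rw [(hD2v i).fderiv]
      rfl
    have := hHv x hx
    linarith [this, h1]
  -- componentwise derivative computation
  have key : ∀ i : Fin d,
      fderiv ℝ (fun y => ⟪(((d : ℝ) - 2) / 2) • (v y • gradient u y + u y • gradient v y)
          + (En * u y * v y - ⟪gradient u y, gradient v y⟫) • y
          + ⟪y, gradient u y⟫ • gradient v y + ⟪y, gradient v y⟫ • gradient u y,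
          EuclideanSpace.single i (1:ℝ)⟫) x (EuclideanSpace.single i (1:ℝ))
      = (((d:ℝ)-2)/2 * v x) * Au (EuclideanSpace.single i 1) (EuclideanSpace.single i 1)
        + (((d:ℝ)-2)/2 * u x) * Av (EuclideanSpace.single i 1) (EuclideanSpace.single i 1)
        + (2*(((d:ℝ)-2)/2) + 2)
            * (fderiv ℝ u x (EuclideanSpace.single i 1) * fderiv ℝ v x (EuclideanSpace.single i 1))
        + (En * v x) * (x i * fderiv ℝ u x (EuclideanSpace.single i 1))
        + (En * u x) * (x i * fderiv ℝ v x (EuclideanSpace.single i 1))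
        - x i * (∑ j, fderiv ℝ u x (EuclideanSpace.single j 1)
            * Av (EuclideanSpace.single i 1) (EuclideanSpace.single j 1))
        - x i * (∑ j, fderiv ℝ v x (EuclideanSpace.single j 1)
            * Au (EuclideanSpace.single i 1) (EuclideanSpace.single j 1))
        + (En * u x * v x - ∑ j, fderiv ℝ u x (EuclideanSpace.single j 1)
            * fderiv ℝ v x (EuclideanSpace.single j 1))
        + (∑ j, x j * Au (EuclideanSpace.single i 1) (EuclideanSpace.single j 1))
            * fderiv ℝ v x (EuclideanSpace.single i 1)
        + (∑ j, x j * Av (EuclideanSpace.single i 1) (EuclideanSpace.single j 1))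
            * fderiv ℝ u x (EuclideanSpace.single i 1)
        + (∑ j, x j * fderiv ℝ u x (EuclideanSpace.single j 1))
            * Av (EuclideanSpace.single i 1) (EuclideanSpace.single i 1)
        + (∑ j, x j * fderiv ℝ v x (EuclideanSpace.single j 1))
            * Au (EuclideanSpace.single i 1) (EuclideanSpace.single i 1) := by
    intro i
    have hfun : (fun y => (⟪(((d : ℝ) - 2) / 2) • (v y • gradient u y + u y • gradient v y)
          + (En * u y * v y - ⟪gradient u y, gradient v y⟫) • y
          + ⟪y, gradient u y⟫ • gradient v y + ⟪y, gradient v y⟫ • gradient u y,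
          EuclideanSpace.single i (1:ℝ)⟫ : ℝ))
        = fun y =>
          (((d : ℝ) - 2) / 2) * (v y * fderiv ℝ u y (EuclideanSpace.single i (1:ℝ))
              + u y * fderiv ℝ v y (EuclideanSpace.single i (1:ℝ)))
          + (En * u y * v y - ∑ j, fderiv ℝ u y (EuclideanSpace.single j (1:ℝ))
              * fderiv ℝ v y (EuclideanSpace.single j (1:ℝ))) * y i
          + (∑ j, y j * fderiv ℝ u y (EuclideanSpace.single j (1:ℝ)))
              * fderiv ℝ v y (EuclideanSpace.single i (1:ℝ))
          + (∑ j, y j * fderiv ℝ v y (EuclideanSpace.single j (1:ℝ)))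
              * fderiv ℝ u y (EuclideanSpace.single i (1:ℝ)) := by
      funext y
      rw [real_inner_comm, EuclideanSpace.inner_single_left]
      rw [inner_pt_grad, inner_pt_grad, grad_grad]
      rw [clm_expand (fderiv ℝ u y) y, clm_expand (fderiv ℝ v y) y]
      simp only [PiLp.add_apply, PiLp.smul_apply, smul_eq_mul, grad_apply, map_one, one_mul]
    rw [hfun]
    have hG := ((((hvx.mul (hD2u i)).add (hux.mul (hD2v i))).const_mul (((d:ℝ)-2)/2)).add
        (((((hux.const_mul En).mul hvx).sub
          (HasFDerivAt.fun_sum (fun j (_ : j ∈ Finset.univ) => (hD2u j).mul (hD2v j)))).mul (hproj i)))).add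
        ((HasFDerivAt.fun_sum (fun j (_ : j ∈ Finset.univ) => (hproj j).mul (hD2u j))).mul (hD2v i)) |>.add
        ((HasFDerivAt.fun_sum (fun j (_ : j ∈ Finset.univ) => (hproj j).mul (hD2v j))).mul (hD2u i))
    erw [hG.fderiv]
    simp only [ContinuousLinearMap.add_apply, ContinuousLinearMap.smul_apply,
      ContinuousLinearMap.sub_apply, ContinuousLinearMap.comp_apply,
      ContinuousLinearMap.apply_apply, ContinuousLinearMap.coe_sum', Finset.sum_apply,
      smul_eq_mul, PiLp.proj_apply, EuclideanSpace.single_apply,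
      mul_ite, mul_one, mul_zero, Finset.sum_ite_eq, Finset.sum_ite_eq', Finset.mem_univ, if_true,
      Finset.sum_add_distrib, Pi.mul_apply, Pi.sub_apply]
    ring
  unfold divg
  rw [Finset.sum_congr rfl fun i (_ : i ∈ Finset.univ) => key i]
  -- swap lemmas
  have hT1 : ∑ i, x i * (∑ j, fderiv ℝ v x (EuclideanSpace.single j 1)
        * Au (EuclideanSpace.single i 1) (EuclideanSpace.single j 1))
      = ∑ i, (∑ j, x j * Au (EuclideanSpace.single i 1) (EuclideanSpace.single j 1))
        * fderiv ℝ v x (EuclideanSpace.single i 1) := by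
    simp only [Finset.mul_sum, Finset.sum_mul]
    rw [Finset.sum_comm]
    exact Finset.sum_congr rfl fun i _ => Finset.sum_congr rfl fun j _ => by
      rw [hsymU (EuclideanSpace.single j 1) (EuclideanSpace.single i 1)]; ring
  have hT2 : ∑ i, x i * (∑ j, fderiv ℝ u x (EuclideanSpace.single j 1)
        * Av (EuclideanSpace.single i 1) (EuclideanSpace.single j 1))
      = ∑ i, (∑ j, x j * Av (EuclideanSpace.single i 1) (EuclideanSpace.single j 1))
        * fderiv ℝ u x (EuclideanSpace.single i 1) := by
    simp only [Finset.mul_sum, Finset.sum_mul]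
    rw [Finset.sum_comm]
    exact Finset.sum_congr rfl fun i _ => Finset.sum_congr rfl fun j _ => by
      rw [hsymV (EuclideanSpace.single j 1) (EuclideanSpace.single i 1)]; ring
  simp only [Finset.sum_add_distrib, Finset.sum_sub_distrib, ← Finset.mul_sum,
    Finset.sum_const, Finset.card_univ, Fintype.card_fin, nsmul_eq_mul]
  rw [hT1, hT2, hEu, hEv]
  have h2 : (2:ℝ) ≤ (d:ℝ) := by exact_mod_cast hd
  ring
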